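/- Let n ≥ 2 and m ≥ 2, and let l be the minimal positive integer such that m divides l·n. Let H be the subgroup of Z_n(D_{Z_m}) generated by u h_1 u^{-1}, h_1, …, h_{n-1}, and let θ_n = γ_n γ_{n-1} ⋯ γ_1, where γ_j = h_{j-1}⋯h_1 u h_1⋯h_{j-1}. Then θ_n^l is a nontrivial element of H that commutes with every element of H; in particular the center of H is nontrivial. -/

import Mathlib

namespace Stmt16

/-- Generators of `Z_n(D_{Z_m})`: `some i` is `h_{i+1}` for `i : Fin (n-1)`, `none` is `u`. -/
abbrev Gen (n : ℕ) := Option (Fin (n - 1))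

def H {n : ℕ} (i : Fin (n - 1)) : FreeGroup (Gen n) := FreeGroup.of (some i)

def U {n : ℕ} : FreeGroup (Gen n) := FreeGroup.of none

/-- Defining relations of `Z_n(D_{Z_m})`. -/
def zrels (n m : ℕ) : Set (FreeGroup (Gen n)) :=
  {r | r = U ^ m
    ∨ (∃ i j : Fin (n - 1), (i : ℕ) + 1 = (j : ℕ) ∧
        r = H i * H j * H i * (H j * H i * H j)⁻¹)
    ∨ (∃ i j : Fin (n - 1), (i : ℕ) + 2 ≤ (j : ℕ) ∧
        r = H i * H j * (H j * H i)⁻¹)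
    ∨ (∃ i : Fin (n - 1), 1 ≤ (i : ℕ) ∧ r = U * H i * (H i * U)⁻¹)
    ∨ (∃ i : Fin (n - 1), (i : ℕ) = 0 ∧
        r = (H i * U * H i) * U * (U * (H i * U * H i))⁻¹)}

/-- The orbifold braid group `Z_n(D_{Z_m})`. -/
abbrev Z (n m : ℕ) := PresentedGroup (zrels n m)

/-- `h_j` (1-based) as an element of `Z_n(D_{Z_m})`; equal to `1` when out of range. -/
def hh (n m : ℕ) (j : ℕ) : Z n m :=
  if hj : j - 1 < n - 1 then PresentedGroup.of (some ⟨j - 1, hj⟩) else 1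

def uu (n m : ℕ) : Z n m := PresentedGroup.of none

/-- `γ_j = h_{j-1} ⋯ h_1 · u · h_1 ⋯ h_{j-1}`. -/
def γ (n m : ℕ) (j : ℕ) : Z n m :=
  (((List.range (j - 1)).map (fun k => hh n m (k + 1))).reverse).prod * uu n m *
    ((List.range (j - 1)).map (fun k => hh n m (k + 1))).prod

/-- `θ_n = γ_n γ_{n-1} ⋯ γ_1`. -/
def θ (n m : ℕ) : Z n m :=
  (((List.range n).map (fun k => γ n m (k + 1))).reverse).prod

/-- The subgroup generated by `u h_1 u⁻¹, h_1, …, h_{n-1}` (the copy of `Ã(Δ_n^m) = B(m,m,n)`). -/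
def Hsub (n m : ℕ) : Subgroup (Z n m) :=
  Subgroup.closure
    (insert (uu n m * hh n m 1 * (uu n m)⁻¹)
      (Set.range fun i : Fin (n - 1) => (PresentedGroup.of (some i) : Z n m)))

section Lemmas

variable {n m : ℕ}

lemma relz {r : FreeGroup (Gen n)} (hr : r ∈ zrels n m) :
    (QuotientGroup.mk r : Z n m) = 1 :=
  (QuotientGroup.eq_one_iff r).mpr (Subgroup.subset_normalClosure hr)

lemma of_eq_hh (i : Fin (n - 1)) :
    (PresentedGroup.of (some i) : Z n m) = hh n m (i.1 + 1) := by
  have h : i.1 + 1 - 1 < n - 1 := by simpa using i.isLt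
  rw [hh, dif_pos h]
  congr 1

lemma hh_out (j : ℕ) (h : ¬ (j - 1 < n - 1)) : hh n m j = 1 := by
  rw [hh, dif_neg h]

lemma mkH (i : Fin (n-1)) : (QuotientGroup.mk (H i) : Z n m) = hh n m (i.1+1) :=
  of_eq_hh i

lemma mkU : (QuotientGroup.mk (U : FreeGroup (Gen n)) : Z n m) = uu n m := rfl

lemma W1 : (uu n m) ^ m = 1 := by
  have := relz (n := n) (m := m) (r := U ^ m) (Or.inl rfl)
  simp only [QuotientGroup.mk_pow, mkU] at this
  exact this

lemma W2 {j : ℕ} (h1 : 1 ≤ j) (h2 : j + 1 ≤ n - 1) :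
    hh n m j * hh n m (j+1) * hh n m j = hh n m (j+1) * hh n m j * hh n m (j+1) := by
  have hi : j - 1 < n - 1 := by omega
  have hj : j + 1 - 1 < n - 1 := by omega
  have hrel : (H ⟨j-1, hi⟩ * H ⟨j, hj⟩ * H ⟨j-1, hi⟩ *
      (H ⟨j, hj⟩ * H ⟨j-1, hi⟩ * H ⟨j, hj⟩)⁻¹ : FreeGroup (Gen n)) ∈ zrels n m := by
    refine Or.inr (Or.inl ⟨⟨j-1, hi⟩, ⟨j, hj⟩, by simp only [Fin.val_mk]; omega, rfl⟩)
  have := relz (m := m) hrel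
  simp only [QuotientGroup.mk_mul, QuotientGroup.mk_inv, mkH, mkU, Fin.val_mk] at this
  have e1 : j - 1 + 1 = j := by omega
  rw [e1] at this
  rw [mul_inv_eq_one] at this
  exact this

lemma W3 {i j : ℕ} (h1 : 1 ≤ i) (h2 : i + 2 ≤ j) :
    hh n m i * hh n m j = hh n m j * hh n m i := by
  by_cases hj : j - 1 < n - 1
  · have hi : i - 1 < n - 1 := by omega
    have hrel : (H ⟨i-1, hi⟩ * H ⟨j-1, hj⟩ * (H ⟨j-1, hj⟩ * H ⟨i-1, hi⟩)⁻¹ :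
        FreeGroup (Gen n)) ∈ zrels n m := by
      refine Or.inr (Or.inr (Or.inl ⟨⟨i-1, hi⟩, ⟨j-1, hj⟩, by simp only [Fin.val_mk]; omega, rfl⟩))
    have := relz (m := m) hrel
    simp only [QuotientGroup.mk_mul, QuotientGroup.mk_inv, mkH, mkU, Fin.val_mk] at this
    have e1 : i - 1 + 1 = i := by omega
    have e2 : j - 1 + 1 = j := by omega
    rw [e1, e2, mul_inv_eq_one] at this
    exact this
  · rw [hh_out j hj]; rw [mul_one, one_mul]

lemma W4 {i : ℕ} (h : 2 ≤ i) :
    uu n m * hh n m i = hh n m i * uu n m := by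
  by_cases hi : i - 1 < n - 1
  · have hrel : (U * H ⟨i-1, hi⟩ * (H ⟨i-1, hi⟩ * U)⁻¹ :
        FreeGroup (Gen n)) ∈ zrels n m := by
      refine Or.inr (Or.inr (Or.inr (Or.inl ⟨⟨i-1, hi⟩, by simp only [Fin.val_mk]; omega, rfl⟩)))
    have := relz (m := m) hrel
    simp only [QuotientGroup.mk_mul, QuotientGroup.mk_inv, mkH, mkU, Fin.val_mk] at this
    have e1 : i - 1 + 1 = i := by omega
    rw [e1, mul_inv_eq_one] at this
    exact this
  · rw [hh_out i hi, mul_one, one_mul]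

lemma W5 (hn : 2 ≤ n) :
    hh n m 1 * uu n m * hh n m 1 * uu n m = uu n m * (hh n m 1 * uu n m * hh n m 1) := by
  have hi : 1 - 1 < n - 1 := by omega
  have hrel : ((H ⟨0, hi⟩ * U * H ⟨0, hi⟩) * U * (U * (H ⟨0, hi⟩ * U * H ⟨0, hi⟩))⁻¹ :
      FreeGroup (Gen n)) ∈ zrels n m := by
    refine Or.inr (Or.inr (Or.inr (Or.inr ⟨⟨0, hi⟩, rfl, rfl⟩)))
  have := relz (m := m) hrel
  simp only [QuotientGroup.mk_mul, QuotientGroup.mk_inv, mkH, mkU, Fin.val_mk] at this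
  rw [mul_inv_eq_one] at this
  exact this

end Lemmas
/-- `Θ k = γ_k ⋯ γ_1`. -/
def Θ (n m : ℕ) : ℕ → Z n m
  | 0 => 1
  | (k+1) => γ n m (k+1) * Θ n m k

section Lemmas2

variable {n m : ℕ}

private lemma tv2 {G : Type*} [Group G] {a b : G} (h : a * b = b * a) (t : G) :
    a * (b * t) = b * (a * t) := by rw [← mul_assoc, h, mul_assoc]

private lemma tv3 {G : Type*} [Group G] {a b c d e f : G} (h : a*b*c = d*e*f) (t : G) :
    a*(b*(c*t)) = d*(e*(f*t)) := by
  rw [← mul_assoc, ← mul_assoc, h, mul_assoc, mul_assoc]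

lemma γ_one : γ n m 1 = uu n m := by simp [γ]

lemma γ_succ {j : ℕ} (h : 1 ≤ j) :
    γ n m (j+1) = hh n m j * γ n m j * hh n m j := by
  obtain ⟨k, rfl⟩ : ∃ k, j = k + 1 := ⟨j - 1, by omega⟩
  simp only [γ, Nat.add_sub_cancel, List.range_succ, List.map_append, List.map_cons,
    List.map_nil, List.reverse_append, List.reverse_cons, List.reverse_nil, List.nil_append,
    List.cons_append, List.prod_cons, List.prod_append, List.prod_nil, mul_one, one_mul]
  simp [mul_assoc]

lemma θ_eq : θ n m = Θ n m n := by
  suffices h : ∀ N, (((List.range N).map (fun k => γ n m (k + 1))).reverse).prod = Θ n m N from h n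
  intro N
  induction N with
  | zero => simp [Θ]
  | succ k ih => simp [List.range_succ, Θ, ← ih]

lemma commW4 {i : ℕ} (h : 2 ≤ i) : Commute (uu n m) (hh n m i) := W4 h

/-- u commutes with every γ_j. -/
lemma comm_u_γ (hn : 2 ≤ n) : ∀ j, 1 ≤ j → Commute (uu n m) (γ n m j) := by
  intro j hj
  induction j, hj using Nat.le_induction with
  | base => rw [γ_one]
  | succ j hj ih =>
    rw [γ_succ hj]
    rcases Nat.lt_or_ge j 2 with h2 | h2
    · have hj1 : j = 1 := by omega
      subst hj1
      rw [γ_one]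
      show uu n m * (hh n m 1 * uu n m * hh n m 1) = hh n m 1 * uu n m * hh n m 1 * uu n m
      exact (W5 hn).symm
    · exact ((commW4 h2).mul_right ih).mul_right (commW4 h2)

/-- h_i commutes with γ_j for i ≥ j+1. -/
lemma comm_h_γ_high : ∀ j, 1 ≤ j → ∀ i, j + 1 ≤ i → Commute (hh n m i) (γ n m j) := by
  intro j hj
  induction j, hj using Nat.le_induction with
  | base => intro i hi; rw [γ_one]; exact (commW4 hi).symm
  | succ j hj ih =>
    intro i hi
    rw [γ_succ hj]
    have hcomm : Commute (hh n m i) (hh n m j) := (W3 hj (by omega)).symm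
    exact (hcomm.mul_right (ih i (by omega))).mul_right hcomm

/-- h_i commutes with γ_j for i+2 ≤ j ≤ n. -/
lemma comm_h_γ_low : ∀ j, j ≤ n → ∀ i, 1 ≤ i → i + 2 ≤ j → Commute (hh n m i) (γ n m j) := by
  intro j
  induction j with
  | zero => intro _ i _ h; omega
  | succ j ihj =>
    intro hjn i hi hij
    have hj1 : 1 ≤ j := by omega
    rw [γ_succ hj1]
    rcases Nat.lt_or_ge (i+2) (j+1) with hlt | hge
    · -- i + 2 ≤ j
      have hcomm : Commute (hh n m i) (hh n m j) := W3 hi (by omega)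
      exact (hcomm.mul_right (ihj (by omega) i hi (by omega))).mul_right hcomm
    · -- i + 2 = j + 1, i.e. j = i + 1
      have hji : j = i + 1 := by omega
      subst hji
      rw [γ_succ hi]
      -- goal : Commute (hh i) (hh (i+1) * (hh i * γ i * hh i) * hh (i+1))
      have F2 : hh n m i * hh n m (i+1) * hh n m i
          = hh n m (i+1) * hh n m i * hh n m (i+1) := W2 hi (by omega)
      have Fb : Commute (hh n m (i+1)) (γ n m i) := comm_h_γ_high i hi (i+1) (by omega)
      have braid' : hh n m (i+1) * (hh n m i * hh n m (i+1))
          = hh n m i * (hh n m (i+1) * hh n m i) := by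
        have := F2.symm
        rw [mul_assoc, mul_assoc] at this
        exact this
      show hh n m i * (hh n m (i+1) * (hh n m i * γ n m i * hh n m i) * hh n m (i+1))
          = hh n m (i+1) * (hh n m i * γ n m i * hh n m i) * hh n m (i+1) * hh n m i
      simp only [mul_assoc]
      rw [tv3 F2, tv2 Fb.eq, braid']

/-- Key squared relation: h_i commutes with γ_i h_i γ_i. -/
lemma comm_sq : ∀ i, 1 ≤ i → i + 1 ≤ n →
    Commute (hh n m i) (γ n m i * hh n m i * γ n m i) := by
  intro i hi
  induction i, hi using Nat.le_induction with
  | base =>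
    intro hn
    rw [γ_one]
    show hh n m 1 * (uu n m * hh n m 1 * uu n m) = uu n m * hh n m 1 * uu n m * hh n m 1
    have w5 := W5 (n := n) (m := m) hn
    simp only [mul_assoc] at w5 ⊢
    exact w5.symm ▸ rfl
  | succ i hi ih =>
    intro hin
    have ihc : Commute (hh n m i) (γ n m i * hh n m i * γ n m i) := ih (by omega)
    rw [γ_succ hi]
    have F2 : hh n m i * hh n m (i+1) * hh n m i
        = hh n m (i+1) * hh n m i * hh n m (i+1) := W2 hi (by omega)
    have F1 : Commute (hh n m (i+1)) (γ n m i) := comm_h_γ_high i hi (i+1) (by omega)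
    set a := hh n m i with ha
    set b := hh n m (i+1) with hb
    set g := γ n m i with hg
    have key4 : ∀ t, a * (g * (a * (g * t))) = g * (a * (g * (a * t))) := by
      intro t
      have := tv2 ihc.eq t
      simpa [mul_assoc] using this
    have braid' : b * (a * b) = a * (b * a) := by
      have := F2.symm; rw [mul_assoc, mul_assoc] at this; exact this
    have braid'' : a * (b * a) = b * (a * b) := braid'.symm
    have F2Assoc : b * a * b = a * b * a := F2.symm
    show b * (a * g * a * b * (a * g * a)) = a * g * a * b * (a * g * a) * b
    simp only [mul_assoc]
    -- LHS: b a g a b a g a ; RHS: a g a b a g a b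
    conv_lhs => rw [tv3 F2, tv2 F1.eq, tv2 F1.symm.eq, tv3 F2Assoc, key4, braid'']
    conv_rhs => rw [tv3 F2, tv2 F1.eq, tv2 F1.symm.eq]
  
end Lemmas2
section Lemmas3

variable {n m : ℕ}

lemma comm_h_pair {i : ℕ} (hi : 1 ≤ i) (hin : i + 1 ≤ n) :
    Commute (hh n m i) (γ n m (i+1) * γ n m i) := by
  have cs := comm_sq (n := n) (m := m) i hi hin
  have cs' : hh n m i * (γ n m i * (hh n m i * γ n m i))
      = γ n m i * (hh n m i * (γ n m i * hh n m i)) := by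
    simpa [mul_assoc] using cs.eq
  rw [γ_succ hi]
  show hh n m i * (hh n m i * γ n m i * hh n m i * γ n m i)
      = hh n m i * γ n m i * hh n m i * γ n m i * hh n m i
  simp only [mul_assoc]
  rw [cs']

lemma comm_h_Θ_low (i : ℕ) : ∀ k, k < i → Commute (hh n m i) (Θ n m k) := by
  intro k
  induction k with
  | zero => intro _; exact Commute.one_right _
  | succ k ih =>
    intro hk
    show Commute (hh n m i) (γ n m (k+1) * Θ n m k)
    exact (comm_h_γ_high (k+1) (by omega) i (by omega)).mul_right (ih (by omega))

lemma comm_h_Θ {i : ℕ} (hi : 1 ≤ i) : ∀ k, i + 1 ≤ k → k ≤ n → Commute (hh n m i) (Θ n m k) := by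
  intro k hk
  induction k, hk using Nat.le_induction with
  | base =>
    intro hin
    obtain ⟨p, rfl⟩ : ∃ p, i = p + 1 := ⟨i - 1, by omega⟩
    show Commute (hh n m (p+1)) (γ n m (p+2) * (γ n m (p+1) * Θ n m p))
    rw [← mul_assoc]
    exact (comm_h_pair (by omega) (by omega)).mul_right (comm_h_Θ_low _ p (by omega))
  | succ k hk ih =>
    intro hkn
    show Commute (hh n m i) (γ n m (k+1) * Θ n m k)
    exact (comm_h_γ_low (k+1) hkn i hi (by omega)).mul_right (ih (by omega))

lemma comm_u_Θ (hn : 2 ≤ n) : ∀ k, Commute (uu n m) (Θ n m k) := by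
  intro k
  induction k with
  | zero => exact Commute.one_right _
  | succ k ih =>
    show Commute (uu n m) (γ n m (k+1) * Θ n m k)
    exact (comm_u_γ hn (k+1) (by omega)).mul_right ih

lemma theta_commute (hn : 2 ≤ n) (z : Z n m) : Commute (θ n m) z := by
  rw [θ_eq]
  induction z using QuotientGroup.induction_on with
  | _ w =>
    induction w using FreeGroup.induction_on with
    | C1 => exact Commute.one_right _
    | of x =>
      cases x with
      | none =>
        exact (comm_u_Θ hn n).symm
      | some i =>
        have h1 : (QuotientGroup.mk (FreeGroup.of (some i)) : Z n m) = hh n m (i.1+1) :=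
          of_eq_hh i
        have h2 : (i.1 + 1) + 1 ≤ n := by have := i.isLt; omega
        rw [h1]
        exact (comm_h_Θ (by omega) n h2 (le_refl n)).symm
    | inv_of x hx => exact hx.inv_right
    | mul x y hx hy => exact hx.mul_right hy

end Lemmas3
section Lemmas4

variable {n m : ℕ}

lemma eZrels : ∀ r ∈ zrels n m,
    FreeGroup.lift (fun x : Gen n => match x with
      | none => (1 : Multiplicative ℤ)
      | some _ => Multiplicative.ofAdd 1) r = 1 := by
  intro r hr
  rcases hr with h | ⟨i, j, _, h⟩ | ⟨i, j, _, h⟩ | ⟨i, _, h⟩ | ⟨i, _, h⟩ <;>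
    subst h <;>
    simp only [H, U, map_mul, map_inv, map_pow, FreeGroup.lift_apply_of] <;>
    group

/-- Exponent-sum homomorphism killing `u`. -/
def eZ (n m : ℕ) : Z n m →* Multiplicative ℤ :=
  PresentedGroup.toGroup (eZrels (n := n) (m := m))

lemma eZ_u : eZ n m (uu n m) = 1 := PresentedGroup.toGroup.of _
lemma eZ_h {j : ℕ} (h1 : 1 ≤ j) (h2 : j ≤ n - 1) :
    eZ n m (hh n m j) = Multiplicative.ofAdd 1 := by
  have hj : j - 1 < n - 1 := by omega
  rw [hh, dif_pos hj]
  exact PresentedGroup.toGroup.of _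

lemma eZ_γ : ∀ j, 1 ≤ j → j ≤ n →
    eZ n m (γ n m j) = Multiplicative.ofAdd (2 * ((j : ℤ) - 1)) := by
  intro j hj
  induction j, hj using Nat.le_induction with
  | base => intro _; rw [γ_one, eZ_u]; norm_num
  | succ j hj ih =>
    intro hjn
    rw [γ_succ hj, map_mul, map_mul, eZ_h hj (by omega), ih (by omega)]
    rw [← ofAdd_add, ← ofAdd_add]
    congr 1
    push_cast
    ring

lemma eZ_Θ : ∀ k, k ≤ n → eZ n m (Θ n m k) = Multiplicative.ofAdd ((k : ℤ) * ((k : ℤ) - 1)) := by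
  intro k
  induction k with
  | zero => intro _; show eZ n m 1 = _; rw [map_one]; norm_num
  | succ k ih =>
    intro hk
    show eZ n m (γ n m (k+1) * Θ n m k) = _
    rw [map_mul, eZ_γ (k+1) (by omega) hk, ih (by omega), ← ofAdd_add]
    congr 1
    push_cast
    ring

lemma theta_pow_ne_one (hn : 2 ≤ n) {l : ℕ} (hl : 0 < l) : (θ n m) ^ l ≠ 1 := by
  intro h
  have h2 : eZ n m ((θ n m) ^ l) = 1 := by rw [h, map_one]
  rw [map_pow, θ_eq, eZ_Θ n (le_refl n)] at h2
  rw [← ofAdd_nsmul] at h2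
  have h3 : (l : ℤ) * ((n : ℤ) * ((n : ℤ) - 1)) = 0 := by
    have := Multiplicative.ofAdd.injective (h2.trans (ofAdd_zero).symm)
    rw [nsmul_eq_mul] at this
    exact this
  have hn' : (2 : ℤ) ≤ (n : ℤ) := by exact_mod_cast hn
  have hl' : (1 : ℤ) ≤ (l : ℤ) := by exact_mod_cast hl
  have p3 : (0:ℤ) < (n:ℤ) - 1 := by omega
  have p2 : (0:ℤ) < (n:ℤ) := by omega
  have p1 : (0:ℤ) < (l:ℤ) := by omega
  have := mul_pos p1 (mul_pos p2 p3)
  omega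

end Lemmas4
section Lemmas5

variable {n m : ℕ}

private lemma tv4 {G : Type*} [Group G] {a b c d e f g k : G} (h : a*b*c*d = e*f*g*k) (t : G) :
    a*(b*(c*(d*t))) = e*(f*(g*(k*t))) := by
  rw [← mul_assoc, ← mul_assoc, ← mul_assoc, h, mul_assoc, mul_assoc, mul_assoc]

lemma hh_mem (j : ℕ) : hh n m j ∈ Hsub n m := by
  by_cases hj : j - 1 < n - 1
  · rw [hh, dif_pos hj]
    exact Subgroup.subset_closure (Set.mem_insert_of_mem _ ⟨⟨j-1, hj⟩, rfl⟩)
  · rw [hh, dif_neg hj]; exact one_mem _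

lemma a1_mem : uu n m * hh n m 1 * (uu n m)⁻¹ ∈ Hsub n m :=
  Subgroup.subset_closure (Set.mem_insert _ _)

/-- `u a₁ u⁻¹ = a₁⁻¹ h₁ a₁`. -/
lemma conj_u_a1 (hn : 2 ≤ n) :
    uu n m * (uu n m * hh n m 1 * (uu n m)⁻¹) * (uu n m)⁻¹
      = (uu n m * hh n m 1 * (uu n m)⁻¹)⁻¹ * hh n m 1 * (uu n m * hh n m 1 * (uu n m)⁻¹) := by
  have w5 := W5 (n := n) (m := m) hn
  -- w5 : h u h u = u (h u h)
  have w5' : hh n m 1 * (uu n m * (hh n m 1 * uu n m))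
      = uu n m * (hh n m 1 * (uu n m * hh n m 1)) := by
    simpa [mul_assoc] using w5
  rw [← mul_right_cancel_iff (a := uu n m * uu n m)]
  simp only [mul_inv_rev, inv_inv, mul_assoc, inv_mul_cancel_left, inv_mul_cancel,
    mul_one, one_mul]
  rw [w5']
  simp

/-- `u⁻¹ h₁ u = h₁ a₁ h₁⁻¹`. -/
lemma conj_uinv_h1 (hn : 2 ≤ n) :
    (uu n m)⁻¹ * hh n m 1 * uu n m
      = hh n m 1 * (uu n m * hh n m 1 * (uu n m)⁻¹) * (hh n m 1)⁻¹ := by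
  have w5 := W5 (n := n) (m := m) hn
  have w5' : hh n m 1 * (uu n m * (hh n m 1 * uu n m))
      = uu n m * (hh n m 1 * (uu n m * hh n m 1)) := by
    simpa [mul_assoc] using w5
  refine mul_left_cancel (a := uu n m) (mul_right_cancel (b := hh n m 1 * uu n m) ?_)
  simp only [mul_inv_rev, inv_inv, mul_assoc, inv_mul_cancel_left, mul_inv_cancel_left,
    inv_mul_cancel, mul_inv_cancel, mul_one, one_mul]
  exact w5'

lemma conj_u_hj {j : ℕ} (hj : 2 ≤ j) :
    uu n m * hh n m j * (uu n m)⁻¹ = hh n m j := by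
  rw [W4 hj]; simp

lemma conj_uinv_hj {j : ℕ} (hj : 2 ≤ j) :
    (uu n m)⁻¹ * hh n m j * uu n m = hh n m j := by
  rw [mul_assoc, ← W4 hj]; simp

lemma conj_u_mem (hn : 2 ≤ n) : ∀ x ∈ Hsub n m, uu n m * x * (uu n m)⁻¹ ∈ Hsub n m := by
  intro x hx
  induction hx using Subgroup.closure_induction with
  | mem x hx =>
    rcases hx with rfl | ⟨i, rfl⟩
    · rw [conj_u_a1 hn]
      exact mul_mem (mul_mem (inv_mem (a1_mem)) (hh_mem 1)) a1_mem
    · show uu n m * PresentedGroup.of (some i) * (uu n m)⁻¹ ∈ Hsub n m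
      rw [of_eq_hh]
      rcases Nat.eq_zero_or_pos i.1 with h0 | h0
      · rw [h0]
        exact a1_mem
      · rw [conj_u_hj (by omega)]
        exact hh_mem _
  | one => simpa using one_mem _
  | mul x y hx hy ihx ihy =>
    have : uu n m * (x * y) * (uu n m)⁻¹
        = (uu n m * x * (uu n m)⁻¹) * (uu n m * y * (uu n m)⁻¹) := by group
    rw [this]; exact mul_mem ihx ihy
  | inv x hx ihx =>
    have : uu n m * x⁻¹ * (uu n m)⁻¹ = (uu n m * x * (uu n m)⁻¹)⁻¹ := by group
    rw [this]; exact inv_mem ihx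

end Lemmas5
section Lemmas6

variable {n m : ℕ}

lemma conj_uinv_mem (hn : 2 ≤ n) : ∀ x ∈ Hsub n m, (uu n m)⁻¹ * x * uu n m ∈ Hsub n m := by
  intro x hx
  induction hx using Subgroup.closure_induction with
  | mem x hx =>
    rcases hx with rfl | ⟨i, rfl⟩
    · have e : (uu n m)⁻¹ * (uu n m * hh n m 1 * (uu n m)⁻¹) * uu n m = hh n m 1 := by
        group
      rw [e]; exact hh_mem 1
    · show (uu n m)⁻¹ * PresentedGroup.of (some i) * uu n m ∈ Hsub n m
      rw [of_eq_hh]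
      rcases Nat.eq_zero_or_pos i.1 with h0 | h0
      · rw [h0]
        rw [show (0:ℕ)+1 = 1 from rfl, conj_uinv_h1 hn]
        exact mul_mem (mul_mem (hh_mem 1) a1_mem) (inv_mem (hh_mem 1))
      · rw [conj_uinv_hj (by omega)]
        exact hh_mem _
  | one => simpa using one_mem _
  | mul x y hx hy ihx ihy =>
    have e : (uu n m)⁻¹ * (x * y) * uu n m
        = ((uu n m)⁻¹ * x * uu n m) * ((uu n m)⁻¹ * y * uu n m) := by group
    rw [e]; exact mul_mem ihx ihy
  | inv x hx ihx =>
    have e : (uu n m)⁻¹ * x⁻¹ * uu n m = ((uu n m)⁻¹ * x * uu n m)⁻¹ := by group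
    rw [e]; exact inv_mem ihx

lemma Hsub_normal (hn : 2 ≤ n) : (Hsub n m).Normal := by
  rw [← Subgroup.normalizer_eq_top_iff, eq_top_iff]
  intro z _
  induction z using QuotientGroup.induction_on with
  | _ w =>
    induction w using FreeGroup.induction_on with
    | C1 => exact one_mem _
    | of x =>
      cases x with
      | none =>
        show uu n m ∈ Subgroup.normalizer (Hsub n m : Set (Z n m))
        rw [Subgroup.mem_normalizer_iff]
        intro h
        constructor
        · intro hmem; exact conj_u_mem hn h hmem
        · intro hmem
          have e : (uu n m)⁻¹ * (uu n m * h * (uu n m)⁻¹) * uu n m = h := by group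
          exact e ▸ conj_uinv_mem hn _ hmem
      | some i =>
        exact Subgroup.le_normalizer
          (Subgroup.subset_closure (Set.mem_insert_of_mem _ ⟨i, rfl⟩))
    | inv_of x hx => exact inv_mem (hx trivial)
    | mul x y hx hy => exact mul_mem (hx trivial) (hy trivial)

lemma theta_pow_mem (hn : 2 ≤ n) {l : ℕ} (hdvd : m ∣ l * n) :
    (θ n m) ^ l ∈ Hsub n m := by
  haveI : (Hsub n m).Normal := Hsub_normal hn
  set q := QuotientGroup.mk' (Hsub n m) with hq
  have key : q ((θ n m) ^ l) = 1 → (θ n m) ^ l ∈ Hsub n m := by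
    intro h
    rw [hq, QuotientGroup.mk'_apply] at h
    exact (QuotientGroup.eq_one_iff _).mp h
  apply key
  have qh : ∀ j, q (hh n m j) = 1 := by
    intro j
    rw [hq, QuotientGroup.mk'_apply]
    exact (QuotientGroup.eq_one_iff _).mpr (hh_mem j)
  have qγ : ∀ j, 1 ≤ j → q (γ n m j) = q (uu n m) := by
    intro j hj
    induction j, hj using Nat.le_induction with
    | base => rw [γ_one]
    | succ j hj ih => rw [γ_succ hj, map_mul, map_mul, qh, ih]; simp
  have qΘ : ∀ k, q (Θ n m k) = (q (uu n m)) ^ k := by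
    intro k
    induction k with
    | zero => show q 1 = _; rw [map_one, pow_zero]
    | succ k ih =>
      show q (γ n m (k+1) * Θ n m k) = _
      rw [map_mul, qγ (k+1) (by omega), ih, pow_succ']
  obtain ⟨c, hc⟩ : ∃ c, n * l = m * c := by
    obtain ⟨c, hc⟩ := hdvd; exact ⟨c, by rw [← hc]; ring⟩
  have hu : (uu n m) ^ (n * l) = 1 := by
    rw [hc, pow_mul, W1, one_pow]
  rw [map_pow, θ_eq, qΘ n, ← pow_mul, ← map_pow, hu, map_one]

end Lemmas6

theorem stmt_16 (n m l : ℕ) (hn : 2 ≤ n) (hm : 2 ≤ m)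
    (hl : 0 < l) (hdvd : m ∣ l * n)
    (hmin : ∀ l' : ℕ, 0 < l' → m ∣ l' * n → l ≤ l') :
    (θ n m) ^ l ∈ Hsub n m ∧ (θ n m) ^ l ≠ 1 ∧
      ∀ x ∈ Hsub n m, (θ n m) ^ l * x = x * (θ n m) ^ l := by
  refine ⟨theta_pow_mem hn hdvd, theta_pow_ne_one hn hl, ?_⟩
  intro x hx
  exact ((theta_commute hn x).pow_left l).eq

end Stmt16
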